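/- Let $f : [a,b] \to \mathbb{R}$ be differentiable with $|f'(t)| \le M$ for all $t \in (a,b)$. Then for any $p \in (a,b)$, $\left| f(p) - \frac{1}{b-a}\int_a^b f(t)\,dt \right| \le \left[ \frac{1}{4} + \left( \frac{p - \frac{a+b}{2}}{b-a} \right)^2 \right] (b-a) M$. -/

import Mathlib

open MeasureTheory intervalIntegral Set

theorem ostrowski_classical_midpoint_form (a b M : ℝ) (f f' : ℝ → ℝ)
    (hab : a < b) (hM : 0 ≤ M)
    (hderiv : ∀ t ∈ Set.Icc a b, HasDerivAt f (f' t) t)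
    (hbound : ∀ t ∈ Set.Ioo a b, |f' t| ≤ M) :
    ∀ p ∈ Set.Ioo a b,
      |f p - (1 / (b - a)) * ∫ t in a..b, f t| ≤
        (1 / 4 + ((p - (a + b) / 2) / (b - a)) ^ 2) * (b - a) * M := by
  intro p hp
  have hba : (0:ℝ) < b - a := by linarith
  -- Lipschitz bound on the open interval
  have hlip : ∀ t ∈ Set.Ioo a b, |f p - f t| ≤ M * |p - t| := by
    intro t ht
    have := (convex_Ioo a b).norm_image_sub_le_of_norm_hasDerivWithin_le
      (f := f) (f' := f')
      (fun x hx => (hderiv x (Ioo_subset_Icc_self hx)).hasDerivWithinAt)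
      (fun x hx => hbound x hx) ht hp
    simpa [Real.norm_eq_abs] using this
  -- f is continuous on [a,b], hence interval integrable
  have hcont : ContinuousOn f (Set.Icc a b) :=
    fun t ht => (hderiv t ht).continuousAt.continuousWithinAt
  have hfi : IntervalIntegrable f volume a b :=
    ContinuousOn.intervalIntegrable (by rw [Set.uIcc_of_le hab.le]; exact hcont)
  -- rewrite the LHS
  have key : f p - (1 / (b - a)) * ∫ t in a..b, f t
      = (1 / (b - a)) * ∫ t in a..b, (f p - f t) := by
    rw [intervalIntegral.integral_sub intervalIntegrable_const hfi,
      intervalIntegral.integral_const]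
    field_simp
    ring
  rw [key, abs_mul]
  have habs : |(1:ℝ) / (b - a)| = 1 / (b - a) := abs_of_pos (by positivity)
  rw [habs]
  -- bound the integral
  have hIb : |∫ t in a..b, (f p - f t)| ≤ ∫ t in a..b, M * |p - t| := by
    rw [← Real.norm_eq_abs]
    refine (intervalIntegral.norm_integral_le_abs_of_norm_le (g := fun t => M * |p - t|) ?_
      (Continuous.intervalIntegrable (by continuity) a b)).trans ?_
    · rw [Set.uIoc_of_le hab.le,
        Measure.restrict_congr_set Ioo_ae_eq_Ioc.symm]
      exact ae_restrict_of_forall_mem measurableSet_Ioo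
        (fun t ht => by simpa [Real.norm_eq_abs] using hlip t ht)
    · rw [abs_of_nonneg (intervalIntegral.integral_nonneg hab.le
        (fun t _ => by positivity))]
  -- compute the integral of M * |p - t|
  have hcalc : ∫ t in a..b, M * |p - t|
      = M * (((p - a) ^ 2 + (b - p) ^ 2) / 2) := by
    have h1 : ∫ t in a..p, M * |p - t| = M * ((p - a) ^ 2 / 2) := by
      have : ∀ t ∈ Set.uIcc a p, M * |p - t| = M * (p - t) := by
        intro t ht
        rw [Set.uIcc_of_le hp.1.le] at ht
        rw [abs_of_nonneg (by linarith [ht.2])]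
      rw [intervalIntegral.integral_congr this]
      rw [show (fun t => M * (p - t)) = (fun t : ℝ => M * p - M * t) by funext t; ring]
      rw [intervalIntegral.integral_sub intervalIntegrable_const
        (Continuous.intervalIntegrable (by continuity) a p),
        intervalIntegral.integral_const,
        intervalIntegral.integral_const_mul, integral_id]
      simp only [smul_eq_mul]; ring
    have h2 : ∫ t in p..b, M * |p - t| = M * ((b - p) ^ 2 / 2) := by
      have : ∀ t ∈ Set.uIcc p b, M * |p - t| = M * (t - p) := by
        intro t ht
        rw [Set.uIcc_of_le hp.2.le] at ht
        rw [abs_sub_comm, abs_of_nonneg (by linarith [ht.1])]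
      rw [intervalIntegral.integral_congr this]
      rw [show (fun t => M * (t - p)) = (fun t : ℝ => M * t - M * p) by funext t; ring]
      rw [intervalIntegral.integral_sub
        (Continuous.intervalIntegrable (by continuity) p b) intervalIntegrable_const,
        intervalIntegral.integral_const,
        intervalIntegral.integral_const_mul, integral_id]
      simp only [smul_eq_mul]; ring
    rw [← intervalIntegral.integral_add_adjacent_intervals
      (Continuous.intervalIntegrable (by continuity) a p)
      (Continuous.intervalIntegrable (by continuity) p b), h1, h2]
    ring
  calc 1 / (b - a) * |∫ t in a..b, (f p - f t)|
      ≤ 1 / (b - a) * (M * (((p - a) ^ 2 + (b - p) ^ 2) / 2)) := by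
        apply mul_le_mul_of_nonneg_left _ (by positivity)
        rw [← hcalc]; exact hIb
    _ = (1 / 4 + ((p - (a + b) / 2) / (b - a)) ^ 2) * (b - a) * M := by
        rw [div_pow]
        field_simp
        ring
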